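/- Let d ≥ 1 be an integer, let μ ∈ ℝ^d, set λ = Σ_{i=1}^d μ_i², and let χ = Σ_{i=1}^d (g_i + μ_i)² where g₁,…,g_d are independent standard real Gaussian random variables. Then for every x > 0, ℙ( χ − (d + λ) ≥ x ) ≤ exp( −(1/2)·( x + d + 2λ − √(d+2λ)·√(2x + d + 2λ) ) ). -/

import Mathlib

open MeasureTheory ProbabilityTheory

open Real




lemma log_le_half_sub_inv {t : ℝ} (ht : 1 ≤ t) : Real.log t ≤ (t - t⁻¹) / 2 := by
  set f : ℝ → ℝ := fun t => (t - t⁻¹) / 2 - Real.log t with hf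
  have hd : ∀ x : ℝ, 0 < x → HasDerivAt f ((1 - -(x^2)⁻¹)/2 - x⁻¹) x := by
    intro x hx0
    exact (((hasDerivAt_id x).sub (hasDerivAt_inv hx0.ne')).div_const 2).sub
      (Real.hasDerivAt_log hx0.ne')
  have hmono : MonotoneOn f (Set.Ici 1) := by
    apply monotoneOn_of_deriv_nonneg (convex_Ici 1)
    · intro x hx
      simp only [Set.mem_Ici] at hx
      exact (hd x (by linarith)).continuousAt.continuousWithinAt
    · intro x hx
      rw [interior_Ici] at hx
      simp only [Set.mem_Ioi] at hx
      exact ((hd x (by linarith)).differentiableAt).differentiableWithinAt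
    · intro x hx
      rw [interior_Ici] at hx
      simp only [Set.mem_Ioi] at hx
      have hx0 : (0:ℝ) < x := by linarith
      rw [(hd x hx0).deriv]
      have key : (1 - -(x^2)⁻¹)/2 - x⁻¹ = (x-1)^2 / (2 * x^2) := by
        field_simp; ring
      rw [key]; positivity
  have h1 : f 1 ≤ f t := hmono (by simp) (by simpa using ht) ht
  simp only [hf, inv_one, sub_self, zero_div, Real.log_one, sub_zero] at h1
  linarith

lemma neg_log_one_sub_le {u : ℝ} (hu0 : 0 ≤ u) (hu1 : u < 1) :
    -Real.log (1 - u) ≤ u + u ^ 2 / (2 * (1 - u)) := by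
  have h1u : (0:ℝ) < 1 - u := by linarith
  have ht : 1 ≤ (1 - u)⁻¹ := (one_le_inv₀ h1u).mpr (by linarith)
  have h := log_le_half_sub_inv ht
  rw [Real.log_inv, inv_inv] at h
  have heq : ((1 - u)⁻¹ - (1 - u)) / 2 = u + u ^ 2 / (2 * (1 - u)) := by
    field_simp; ring
  linarith [heq ▸ h]


lemma gaussian_exp_sq (c m : ℝ) (hc : c < 1/2) :
    Integrable (fun y => Real.exp (c * (y + m)^2)) (gaussianReal 0 1) ∧
    ∫ y, Real.exp (c * (y + m)^2) ∂(gaussianReal 0 1)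
      = (Real.sqrt (1 - 2*c))⁻¹ * Real.exp (c * m^2 / (1 - 2*c)) := by
  have hc2 : (0:ℝ) < 1 - 2*c := by linarith
  set k : ℝ := (1 - 2*c)/2 with hk
  have hkpos : 0 < k := by positivity
  set p : ℝ := 2*c*m/(1-2*c) with hp
  set q : ℝ := c*m^2/(1-2*c) with hq
  set C : ℝ := (Real.sqrt (2*π))⁻¹ * Real.exp q with hC
  have hpt : ∀ y : ℝ, gaussianPDFReal 0 1 y * Real.exp (c * (y + m)^2)
      = C * Real.exp (-k * (y - p)^2) := by
    intro y
    rw [gaussianPDFReal]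
    push_cast
    rw [mul_one, mul_assoc, ← Real.exp_add, hC, mul_assoc, ← Real.exp_add]
    congr 1
    rw [Real.exp_eq_exp, hq, hk, hp]
    field_simp
    ring
  have hmeasρ : Measurable (fun y => (gaussianPDFReal 0 1 y).toNNReal) :=
    (measurable_gaussianPDFReal 0 1).real_toNNReal
  have hgr : gaussianReal 0 1
      = volume.withDensity (fun y => ((gaussianPDFReal 0 1 y).toNNReal : ENNReal)) := by
    rw [gaussianReal_of_var_ne_zero _ one_ne_zero]; rfl
  have hsmul : ∀ y : ℝ, (gaussianPDFReal 0 1 y).toNNReal • Real.exp (c * (y + m)^2)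
      = C * Real.exp (-k * (y - p)^2) := by
    intro y
    rw [NNReal.smul_def, Real.coe_toNNReal _ (gaussianPDFReal_nonneg 0 1 y)]
    exact hpt y
  have hint : Integrable (fun y => C * Real.exp (-k * (y - p)^2)) volume :=
    ((integrable_exp_neg_mul_sq hkpos).comp_sub_right p).const_mul C
  constructor
  · rw [hgr, integrable_withDensity_iff_integrable_smul hmeasρ]
    exact hint.congr (Filter.Eventually.of_forall fun y => (hsmul y).symm)
  · rw [hgr, integral_withDensity_eq_integral_smul hmeasρ]
    calc ∫ y, (gaussianPDFReal 0 1 y).toNNReal • Real.exp (c * (y + m)^2)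
        = ∫ y, C * Real.exp (-k * (y - p)^2) := by
          exact integral_congr_ae (Filter.Eventually.of_forall hsmul)
      _ = C * ∫ y, Real.exp (-k * (y - p)^2) := integral_const_mul C _
      _ = C * ∫ y, Real.exp (-k * y^2) := by
          rw [integral_sub_right_eq_self (fun y => Real.exp (-k * y^2)) p]
      _ = C * Real.sqrt (π / k) := by rw [integral_gaussian]
      _ = (Real.sqrt (1 - 2*c))⁻¹ * Real.exp (c * m^2 / (1 - 2*c)) := by
          rw [hC]
          have h1 : π / k = (2*π) / (1 - 2*c) := by rw [hk]; field_simp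
          have h2 : Real.sqrt ((2*π)/(1-2*c)) = Real.sqrt (2*π) / Real.sqrt (1-2*c) :=
            Real.sqrt_div (by positivity) _
          have h3 : Real.sqrt (2*π) ≠ 0 := by positivity
          rw [h1, h2, hq]
          field_simp

lemma gaussian_exp_sq_map {Ω : Type*} [MeasureSpace Ω] (c m : ℝ) (hc : c < 1/2)
    (g : Ω → ℝ) (hmg : Measurable g) (hg : Measure.map g ℙ = gaussianReal 0 1) :
    Integrable (fun ω => Real.exp (c * (g ω + m)^2)) ℙ ∧
    ∫ ω, Real.exp (c * (g ω + m)^2) ∂ℙ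
      = (Real.sqrt (1 - 2*c))⁻¹ * Real.exp (c * m^2/(1-2*c)) := by
  have hf : Continuous fun y : ℝ => Real.exp (c * (y + m)^2) := by continuity
  have h2 := gaussian_exp_sq c m hc
  have h1 : Integrable (fun y => Real.exp (c*(y+m)^2)) (Measure.map g ℙ) := hg ▸ h2.1
  have hi := (integrable_map_measure hf.aestronglyMeasurable hmg.aemeasurable).mp h1
  refine ⟨hi, ?_⟩
  calc ∫ ω, Real.exp (c * (g ω + m)^2) ∂ℙ
      = ∫ y, Real.exp (c * (y + m)^2) ∂(Measure.map g ℙ) :=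
        (integral_map hmg.aemeasurable hf.aestronglyMeasurable).symm
    _ = _ := by rw [hg]; exact h2.2

lemma alg1 (A B x : ℝ) (hA : 0 < A) (hB : 0 < B) (hx : x = (B^2 - A^2)/2) :
    -(((1 - A/B)/2)*x) + A^2 * ((1 - A/B)/2)^2 / (1 - 2*((1 - A/B)/2))
      = -(1/2) * (x + A^2 - A*B) := by
  have h1 : 1 - 2*((1 - A/B)/2) = A/B := by ring
  rw [h1, hx]
  field_simp
  ring

/-- Noncentral chi-squared upper tail: if `χ = Σᵢ (gᵢ + μᵢ)²` with `g₁,…,g_d`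
independent standard Gaussians and `λ = Σᵢ μᵢ²`, then for every `x > 0`,
`ℙ(χ − (d+λ) ≥ x) ≤ exp(−(1/2)(x + d + 2λ − √(d+2λ)·√(2x+d+2λ)))`. -/
theorem stmt_12 (d : ℕ) (hd : 1 ≤ d) (μ : Fin d → ℝ) (lam : ℝ)
    (hlam : lam = ∑ i, μ i ^ 2)
    {Ω : Type*} [MeasureSpace Ω] [IsProbabilityMeasure (ℙ : Measure Ω)]
    (g : Fin d → Ω → ℝ) (hmg : ∀ i, Measurable (g i))
    (hindep : iIndepFun g ℙ)
    (hg : ∀ i, Measure.map (g i) ℙ = gaussianReal 0 1)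
    (x : ℝ) (hx : 0 < x) :
    ℙ {ω | x ≤ (∑ i, (g i ω + μ i) ^ 2) - ((d : ℝ) + lam)} ≤
      ENNReal.ofReal (Real.exp (-(1 / 2) * (x + d + 2 * lam -
        Real.sqrt (d + 2 * lam) * Real.sqrt (2 * x + d + 2 * lam)))) := by
  have hlam0 : 0 ≤ lam := hlam ▸ Finset.sum_nonneg fun i _ => sq_nonneg _
  have hd1 : (1:ℝ) ≤ (d:ℝ) := by exact_mod_cast hd
  set a : ℝ := (d:ℝ) + 2*lam with ha_def
  set b : ℝ := 2*x + a with hb_def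
  have ha : 0 < a := by positivity
  have hab : a < b := by simp only [hb_def]; linarith
  set A : ℝ := Real.sqrt a with hA_def
  set B : ℝ := Real.sqrt b with hB_def
  have hA : 0 < A := Real.sqrt_pos.mpr ha
  have hB : 0 < B := Real.sqrt_pos.mpr (lt_trans ha hab)
  have hABlt : A < B := Real.sqrt_lt_sqrt ha.le hab
  have hA2 : A^2 = a := Real.sq_sqrt ha.le
  have hB2 : B^2 = b := Real.sq_sqrt (lt_trans ha hab).le
  set s : ℝ := (1 - A/B)/2 with hs_def
  have hABdiv : 0 < A/B := div_pos hA hB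
  have hABdiv1 : A/B < 1 := (div_lt_one hB).mpr hABlt
  have hs0 : 0 ≤ s := by rw [hs_def]; linarith
  have hs12 : s < 1/2 := by rw [hs_def]; linarith
  have hc1 : 1 - 2*s = A/B := by rw [hs_def]; ring
  have hc1pos : 0 < 1 - 2*s := by rw [hc1]; exact hABdiv
  -- the random variables
  set X : Fin d → Ω → ℝ := fun i ω => (g i ω + μ i)^2 with hX_def
  have hXmeas : ∀ i, Measurable (X i) := fun i => ((hmg i).add_const (μ i)).pow_const 2
  have hXindep : iIndepFun X ℙ :=
    hindep.comp (fun i y => (y + μ i)^2) fun i =>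
      (measurable_id.add_const (μ i)).pow_const 2
  have hXint : ∀ i, Integrable (fun ω => Real.exp (s * X i ω)) ℙ := fun i =>
    (gaussian_exp_sq_map s (μ i) hs12 (g i) (hmg i) (hg i)).1
  have hint_sum : Integrable (fun ω => Real.exp (s * (∑ i, X i) ω)) ℙ :=
    hXindep.integrable_exp_mul_sum hXmeas fun i _ => hXint i
  -- Chernoff
  set ε : ℝ := x + ((d:ℝ) + lam) with hε_def
  have hSeq : {ω | x ≤ (∑ i, (g i ω + μ i) ^ 2) - ((d : ℝ) + lam)}
      = {ω | ε ≤ (∑ i, X i) ω} := by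
    ext ω
    rw [Set.mem_setOf_eq, Set.mem_setOf_eq, Finset.sum_apply, hε_def]
    exact le_sub_iff_add_le
  have hcher := measure_ge_le_exp_mul_mgf (μ := ℙ) (X := ∑ i, X i) ε hs0 hint_sum
  -- mgf value
  have hmgf : mgf (∑ i, X i) ℙ s
      = ((Real.sqrt (1-2*s))⁻¹)^d * Real.exp (s * lam / (1-2*s)) := by
    rw [hXindep.mgf_sum hXmeas]
    have hone : ∀ i : Fin d, mgf (X i) ℙ s
        = (Real.sqrt (1-2*s))⁻¹ * Real.exp (s * (μ i)^2 / (1-2*s)) := fun i =>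
      (gaussian_exp_sq_map s (μ i) hs12 (g i) (hmg i) (hg i)).2
    rw [Finset.prod_congr rfl fun i _ => hone i, Finset.prod_mul_distrib,
      Finset.prod_const, ← Real.exp_sum]
    congr 1
    · simp
    · rw [← Finset.sum_div, ← Finset.mul_sum, hlam]
  -- the exponent bound
  set c1 : ℝ := 1 - 2*s with hc1_def
  set L : ℝ := s + s^2/c1 with hL_def
  clear_value L c1 s ε X B A b a
  have hsqrtc1 : 0 < Real.sqrt c1 := Real.sqrt_pos.mpr hc1pos
  have hpow_le : ((Real.sqrt c1)⁻¹)^d ≤ Real.exp ((d:ℝ) * L) := by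
    have hc1ne : c1 ≠ 0 := hc1pos.ne'
    have hlog : -Real.log c1 ≤ 2 * L := by
      have h := neg_log_one_sub_le (u := 2*s) (by linarith) (by linarith)
      rw [← hc1_def] at h
      have he : 2*s + (2*s)^2/(2*c1) = 2*L := by
        rw [hL_def]; field_simp
      linarith [he ▸ h]
    have h1 : (Real.sqrt c1)⁻¹ ≤ Real.exp L := by
      rw [← Real.log_le_iff_le_exp (by positivity)]
      rw [Real.log_inv, Real.log_sqrt hc1pos.le]
      calc -(Real.log c1 / 2) = (-Real.log c1)/2 := by ring
        _ ≤ (2*L)/2 := by linarith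
        _ = L := by ring
    calc ((Real.sqrt c1)⁻¹)^d ≤ (Real.exp L)^d :=
          pow_le_pow_left₀ (by positivity) h1 d
      _ = Real.exp ((d:ℝ) * L) := by rw [← Real.exp_nat_mul]
  have hc1ne' : c1 ≠ 0 := hc1pos.ne'
  have hexp_eq : -s * ε + ((d:ℝ) * L + s * lam / c1) = -(s*x) + a * s^2 / c1 := by
    have h12 : (1:ℝ) - 2*s ≠ 0 := by rw [← hc1_def]; exact hc1pos.ne'
    rw [hL_def, hε_def, ha_def, hc1_def]
    linear_combination (s*lam) * (mul_inv_cancel₀ h12)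
  have halg : -(s*x) + a * s^2 / c1 = -(1/2) * (x + a - A*B) := by
    have hxeq : x = (B^2 - A^2)/2 := by rw [hA2, hB2, hb_def]; ring
    rw [hc1_def, hs_def, ← hA2]
    exact alg1 A B x hA hB hxeq
  have hbound : Real.exp (-s * ε) * mgf (∑ i, X i) ℙ s
      ≤ Real.exp (-(1/2) * (x + a - A*B)) := by
    rw [hmgf]
    calc Real.exp (-s * ε) * (((Real.sqrt c1)⁻¹)^d * Real.exp (s * lam / c1))
        ≤ Real.exp (-s * ε) * (Real.exp ((d:ℝ)*L) * Real.exp (s * lam / c1)) := by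
          have h0 : (0:ℝ) ≤ Real.exp (s * lam / c1) := (Real.exp_pos _).le
          have h1 : (0:ℝ) ≤ Real.exp (-s * ε) := (Real.exp_pos _).le
          gcongr
      _ = Real.exp (-s * ε + ((d:ℝ)*L + s * lam / c1)) := by
          rw [← Real.exp_add, ← Real.exp_add]
      _ = Real.exp (-(1/2) * (x + a - A*B)) := by rw [hexp_eq, halg]
  -- final conversion
  have hba : (2*x + ((d:ℝ) + 2*lam) : ℝ) = 2*x + (d:ℝ) + 2*lam := by ring
  rw [hSeq, ← ENNReal.ofReal_toReal (measure_ne_top ℙ _)]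
  refine ENNReal.ofReal_le_ofReal ((hcher.trans hbound).trans (le_of_eq ?_))
  rw [hA_def, hB_def, hb_def, ha_def, hba]
  ring
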